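/- Let β = [[−a, l, 0], [m, A, −𝕁ᵗl], [0, −ᵗm𝕁, a]] be an element of 𝔰𝔬(2,n+1) in the displayed block form, and assume β² = −Id_{n+3}. Then the pairing satisfies l·m = −(1 + a²); in particular l·m < 0, and the lightlike vectors m and 𝕁ᵗl are linearly independent in ℝ^{n+1}. -/
import Mathlib


open Matrix

/- Setup: the Lie algebra 𝔰𝔬(2,n+1) in block form.  The index type of the
(n+3)×(n+3) matrices is `Fin 1 ⊕ (Fin (n+1) ⊕ Fin 1)`, corresponding to the
decomposition ℝ^{n+3} = ℝ ⊕ ℝ^{n+1} ⊕ ℝ. -/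

/-- The index type for (n+3)×(n+3) block matrices. -/
abbrev Idx (n : ℕ) := Fin 1 ⊕ (Fin (n + 1) ⊕ Fin 1)

/-- The Minkowski Gram matrix 𝕁 = diag(−1, 1, …, 1) of signature (1,n) on ℝ^{n+1}. -/
def MinkJ (n : ℕ) : Matrix (Fin (n + 1)) (Fin (n + 1)) ℝ :=
  Matrix.diagonal fun i => if i = 0 then (-1 : ℝ) else 1

/-- The block matrix β = [[−a, l, 0], [m, A, −𝕁ᵗl], [0, −ᵗm𝕁, a]]. -/
def betaMat (n : ℕ) (a : ℝ) (m l : Fin (n + 1) → ℝ)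
    (A : Matrix (Fin (n + 1)) (Fin (n + 1)) ℝ) : Matrix (Idx n) (Idx n) ℝ :=
  Matrix.of fun i j =>
    match i, j with
    | Sum.inl _, Sum.inl _ => -a
    | Sum.inl _, Sum.inr (Sum.inl k) => l k
    | Sum.inl _, Sum.inr (Sum.inr _) => 0
    | Sum.inr (Sum.inl k), Sum.inl _ => m k
    | Sum.inr (Sum.inl k), Sum.inr (Sum.inl k') => A k k'
    | Sum.inr (Sum.inl k), Sum.inr (Sum.inr _) => -((MinkJ n).mulVec l k)
    | Sum.inr (Sum.inr _), Sum.inl _ => 0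
    | Sum.inr (Sum.inr _), Sum.inr (Sum.inl k) => -(Matrix.vecMul m (MinkJ n) k)
    | Sum.inr (Sum.inr _), Sum.inr (Sum.inr _) => a

/-- If β ∈ 𝔰𝔬(2,n+1) in the displayed block form satisfies β² = −Id,
then l·m = −(1 + a²); in particular l·m < 0, and the lightlike vectors m and 𝕁ᵗl
are linearly independent in ℝ^{n+1}. -/
theorem stmt3 (n : ℕ) (hn : 1 ≤ n) (a : ℝ) (m l : Fin (n + 1) → ℝ)
    (A : Matrix (Fin (n + 1)) (Fin (n + 1)) ℝ)
    (hA : Aᵀ * MinkJ n + MinkJ n * A = 0)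
    (hβ : betaMat n a m l A * betaMat n a m l A = -1) :
    l ⬝ᵥ m = -(1 + a ^ 2) ∧ l ⬝ᵥ m < 0 ∧
      LinearIndependent ℝ ![m, (MinkJ n).mulVec l] := by
  have h1 := congrFun (congrFun hβ (Sum.inl 0)) (Sum.inl 0)
  have h2 := congrFun (congrFun hβ (Sum.inl 0)) (Sum.inr (Sum.inr 0))
  have h3 := congrFun (congrFun hβ (Sum.inr (Sum.inr 0))) (Sum.inl 0)
  simp [Matrix.mul_apply, betaMat, Fintype.sum_sum_type] at h1 h2 h3
  have hlm : l ⬝ᵥ m = -(1 + a ^ 2) := by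
    simp only [dotProduct]
    nlinarith [h1]
  have hlJl : l ⬝ᵥ (MinkJ n *ᵥ l) = 0 := h2
  have hmJm : (m ᵥ* MinkJ n) ⬝ᵥ m = 0 := h3
  have hJJ : MinkJ n * MinkJ n = 1 := by
    ext i j
    simp only [MinkJ, Matrix.diagonal_mul_diagonal, Matrix.diagonal_apply, Matrix.one_apply]
    split_ifs <;> norm_num
  have hne : l ⬝ᵥ m ≠ 0 := by rw [hlm]; nlinarith [sq_nonneg a]
  refine ⟨hlm, by rw [hlm]; nlinarith [sq_nonneg a], ?_⟩
  rw [LinearIndependent.pair_iff]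
  intro s t h
  have hl : l ⬝ᵥ (s • m + t • (MinkJ n *ᵥ l)) = 0 := by rw [h]; simp
  rw [dotProduct_add, dotProduct_smul, dotProduct_smul, hlJl, hlm] at hl
  have hs : s = 0 := by
    have : s * -(1 + a ^ 2) = 0 := by simpa using hl
    rcases mul_eq_zero.1 this with h' | h'
    · exact h'
    · nlinarith [sq_nonneg a]
  have hmJ : (m ᵥ* MinkJ n) ⬝ᵥ (s • m + t • (MinkJ n *ᵥ l)) = 0 := by rw [h]; simp
  rw [dotProduct_add, dotProduct_smul, dotProduct_smul, hmJm,
    ← Matrix.dotProduct_mulVec, Matrix.mulVec_mulVec, hJJ, Matrix.one_mulVec] at hmJ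
  have hml : m ⬝ᵥ l = l ⬝ᵥ m := dotProduct_comm m l
  have ht : t = 0 := by
    have : t * (l ⬝ᵥ m) = 0 := by
      rw [← hml]; simpa [hs] using hmJ
    exact (mul_eq_zero.1 this).resolve_right hne
  exact ⟨hs, ht⟩
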